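/- With A₁ = [[0,-1,0],[0,0,1],[0,0,0]], A₂ = [[1,0,0],[0,0,0],[0,0,1]], A₃ = [[0,0,0],[1,0,0],[0,1,0]], Tⱼ = [[0,0],[Aⱼ,0]] ∈ M₆(ℂ), and p(z₁,z₂,z₃) = [[z₁,z₂,0],[z₃,0,z₂],[0,z₃,-z₁]], we have ‖p(T₁,T₂,T₃)‖ ≥ 2 > √3 = sup_{z ∈ closed polydisc} ‖p(z)‖. Hence (T₁,T₂,T₃) fails the matrix-valued von Neumann inequality. -/

import Mathlib

noncomputable def parrottA : Fin 3 → Matrix (Fin 3) (Fin 3) ℂ :=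
  ![!![0, -1, 0; 0, 0, 1; 0, 0, 0],
    !![1, 0, 0; 0, 0, 0; 0, 0, 1],
    !![0, 0, 0; 1, 0, 0; 0, 1, 0]]

noncomputable def parrottT : Fin 3 → Matrix (Fin 3 ⊕ Fin 3) (Fin 3 ⊕ Fin 3) ℂ :=
  fun j => Matrix.fromBlocks 0 0 (parrottA j) 0

/-- The 3×3 block matrix `p(T₁,T₂,T₃)` obtained by substituting `T₁, T₂, T₃` into
`p(z₁,z₂,z₃) = [[z₁,z₂,0],[z₃,0,z₂],[0,z₃,-z₁]]`, acting on `(ℂ⁶)³ ≅ ℂ¹⁸`. -/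
noncomputable def parrottPT :
    Matrix (Fin 3 × (Fin 3 ⊕ Fin 3)) (Fin 3 × (Fin 3 ⊕ Fin 3)) ℂ :=
  Matrix.of fun x y =>
    (![![parrottT 0, parrottT 1, 0],
       ![parrottT 2, 0, parrottT 1],
       ![0, parrottT 2, -parrottT 0]] x.1 y.1) x.2 y.2

lemma parrott_toEuclideanCLM_equiv_symm {n : Type*} [Fintype n] [DecidableEq n]
    (A : Matrix n n ℂ) (x : n → ℂ) :
    Matrix.toEuclideanCLM (𝕜 := ℂ) A ((WithLp.equiv 2 (n → ℂ)).symm x)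
      = (WithLp.equiv 2 (n → ℂ)).symm (Matrix.toLin' A x) := rfl

open Matrix in
lemma parrott_helper_le {n : Type*} [Fintype n] [DecidableEq n] (M : Matrix n n ℂ) (C : ℝ)
    (hC : 0 ≤ C) (h : ∀ v : n → ℂ, ∑ i, ‖M.mulVec v i‖ ^ 2 ≤ C ^ 2 * ∑ i, ‖v i‖ ^ 2) :
    ‖Matrix.toEuclideanCLM (𝕜 := ℂ) M‖ ≤ C := by
  apply ContinuousLinearMap.opNorm_le_bound _ hC
  intro x
  have hx : x = (WithLp.equiv 2 (n → ℂ)).symm (WithLp.equiv 2 (n → ℂ) x) := rfl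
  rw [hx, parrott_toEuclideanCLM_equiv_symm]
  set v : n → ℂ := WithLp.equiv 2 (n → ℂ) x with hv
  have h1 : ‖(WithLp.equiv 2 (n → ℂ)).symm (Matrix.toLin' M v)‖ ^ 2
      ≤ (C * ‖(WithLp.equiv 2 (n → ℂ)).symm v‖) ^ 2 := by
    rw [EuclideanSpace.norm_eq, EuclideanSpace.norm_eq]
    rw [Real.sq_sqrt (by positivity)]
    rw [mul_pow, Real.sq_sqrt (by positivity)]
    simpa [Matrix.toLin'_apply] using h v
  exact le_of_pow_le_pow_left₀ two_ne_zero (by positivity) h1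

open Matrix in
lemma parrott_helper_ge {n : Type*} [Fintype n] [DecidableEq n] (M : Matrix n n ℂ) (C : ℝ)
    (v : n → ℂ) (hv : (0:ℝ) < ∑ i, ‖v i‖ ^ 2)
    (hC : 0 ≤ C) (h : C ^ 2 * ∑ i, ‖v i‖ ^ 2 ≤ ∑ i, ‖M.mulVec v i‖ ^ 2) :
    C ≤ ‖Matrix.toEuclideanCLM (𝕜 := ℂ) M‖ := by
  set x : EuclideanSpace ℂ n := (WithLp.equiv 2 (n → ℂ)).symm v with hx
  have hb := (Matrix.toEuclideanCLM (𝕜 := ℂ) M).le_opNorm x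
  rw [hx, parrott_toEuclideanCLM_equiv_symm] at hb
  have h2 : ‖(WithLp.equiv 2 (n → ℂ)).symm v‖ = Real.sqrt (∑ i, ‖v i‖ ^ 2) := by
    rw [EuclideanSpace.norm_eq]; rfl
  have h3 : ‖(WithLp.equiv 2 (n → ℂ)).symm (Matrix.toLin' M v)‖
      = Real.sqrt (∑ i, ‖M.mulVec v i‖ ^ 2) := by
    rw [EuclideanSpace.norm_eq]; simp [Matrix.toLin'_apply]
  rw [h2, h3] at hb
  have hs : C * Real.sqrt (∑ i, ‖v i‖ ^ 2) ≤ Real.sqrt (∑ i, ‖M.mulVec v i‖ ^ 2) := by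
    rw [← Real.sqrt_sq hC, ← Real.sqrt_mul (by positivity)]
    exact Real.sqrt_le_sqrt h
  have hsp : 0 < Real.sqrt (∑ i, ‖v i‖ ^ 2) := Real.sqrt_pos.2 hv
  nlinarith [le_trans hs hb, (Matrix.toEuclideanCLM (𝕜 := ℂ) M).opNorm_nonneg]

open Complex in
lemma parrott_key_ineq (z₁ z₂ z₃ a b c : ℂ)
    (h₁ : ‖z₁‖ ≤ 1) (h₂ : ‖z₂‖ ≤ 1) (h₃ : ‖z₃‖ ≤ 1) :
    normSq (z₁ * a + z₂ * b) + normSq (z₃ * a + z₂ * c) + normSq (z₃ * b - z₁ * c)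
      ≤ 3 * (normSq a + normSq b + normSq c) := by
  set r₁ := normSq z₁ with hr₁
  set r₂ := normSq z₂ with hr₂
  set r₃ := normSq z₃ with hr₃
  set Na := normSq a; set Nb := normSq b; set Nc := normSq c
  set t := (z₃ * (starRingEnd ℂ) z₁ * b * (starRingEnd ℂ) c).re with ht
  set D := normSq (a - (starRingEnd ℂ) z₁ * z₂ * b - (starRingEnd ℂ) z₃ * z₂ * c) with hD
  have hid : normSq (z₁ * a + z₂ * b) + normSq (z₃ * a + z₂ * c) + normSq (z₃ * b - z₁ * c) + D
      = (1 + r₁ + r₃) * Na + (r₂ + r₃ + r₁ * r₂) * Nb + (r₁ + r₂ + r₂ * r₃) * Nc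
        + 2 * (r₂ - 1) * t := by
    simp only [hr₁, hr₂, hr₃, ht, hD, Na, Nb, Nc, normSq_apply, add_re, add_im, sub_re, sub_im,
      mul_re, mul_im, conj_re, conj_im]
    ring
  have hDpos : 0 ≤ D := normSq_nonneg _
  have h₁' : r₁ ≤ 1 := by
    rw [hr₁, ← Complex.sq_norm]; nlinarith [norm_nonneg z₁]
  have h₂' : r₂ ≤ 1 := by
    rw [hr₂, ← Complex.sq_norm]; nlinarith [norm_nonneg z₂]
  have h₃' : r₃ ≤ 1 := by
    rw [hr₃, ← Complex.sq_norm]; nlinarith [norm_nonneg z₃]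
  have hr₁0 : 0 ≤ r₁ := normSq_nonneg _
  have hr₂0 : 0 ≤ r₂ := normSq_nonneg _
  have hr₃0 : 0 ≤ r₃ := normSq_nonneg _
  have hNa : 0 ≤ Na := normSq_nonneg _
  have hNb : 0 ≤ Nb := normSq_nonneg _
  have hNc : 0 ≤ Nc := normSq_nonneg _
  have habs : -(‖z₃‖ * ‖z₁‖ * ‖b‖ * ‖c‖) ≤ t := by
    have h0 := Complex.abs_re_le_norm (z₃ * (starRingEnd ℂ) z₁ * b * (starRingEnd ℂ) c)
    have h0' := neg_le_of_abs_le h0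
    rw [ht]
    simpa only [norm_mul, Complex.norm_conj] using h0'
  have haux : 0 ≤ r₃ * Nb + r₁ * Nc + 2 * t := by
    have e₁ : r₃ = ‖z₃‖ ^ 2 := (Complex.sq_norm z₃).symm
    have e₂ : r₁ = ‖z₁‖ ^ 2 := (Complex.sq_norm z₁).symm
    have e₃ : Nb = ‖b‖ ^ 2 := (Complex.sq_norm b).symm
    have e₄ : Nc = ‖c‖ ^ 2 := (Complex.sq_norm c).symm
    rw [e₁, e₂, e₃, e₄]
    nlinarith [sq_nonneg (‖z₃‖ * ‖b‖ - ‖z₁‖ * ‖c‖),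
      habs]
  nlinarith [hid, hDpos, mul_nonneg (by linarith : (0:ℝ) ≤ 1 - r₂) haux,
    mul_nonneg (mul_nonneg (by linarith : (0:ℝ) ≤ 1 - r₃) (by linarith : (0:ℝ) ≤ 2 - r₂)) hNb,
    mul_nonneg (mul_nonneg (by linarith : (0:ℝ) ≤ 1 - r₁) (by linarith : (0:ℝ) ≤ 2 - r₂)) hNc,
    mul_nonneg (mul_nonneg hr₁0 (by linarith : (0:ℝ) ≤ 1 - r₂)) hNb,
    mul_nonneg (mul_nonneg hr₃0 (by linarith : (0:ℝ) ≤ 1 - r₂)) hNc,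
    mul_nonneg hNa (by linarith : (0:ℝ) ≤ 2 - r₁ - r₃)]

lemma parrott_poly_le (z₁ z₂ z₃ : ℂ) (h₁ : ‖z₁‖ ≤ 1) (h₂ : ‖z₂‖ ≤ 1)
    (h₃ : ‖z₃‖ ≤ 1) :
    ‖Matrix.toEuclideanCLM (𝕜 := ℂ) !![z₁, z₂, 0; z₃, 0, z₂; 0, z₃, -z₁]‖ ≤ Real.sqrt 3 := by
  apply parrott_helper_le _ _ (Real.sqrt_nonneg 3)
  intro v
  rw [Real.sq_sqrt (by norm_num : (3:ℝ) ≥ 0)]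
  have hk := parrott_key_ineq z₁ z₂ z₃ (v 0) (v 1) (v 2) h₁ h₂ h₃
  simp [Fin.sum_univ_three, Matrix.mulVec, dotProduct,
    Complex.sq_norm, Matrix.cons_val_zero, Matrix.cons_val_one, Matrix.head_cons,
    neg_mul, ← sub_eq_add_neg]
  linarith [hk]

lemma parrott_poly_ge : Real.sqrt 3 ≤
    ‖Matrix.toEuclideanCLM (𝕜 := ℂ) !![(1:ℂ), 1, 0; 1, 0, 1; 0, 1, -1]‖ := by
  apply parrott_helper_ge _ _ ![1, 1, 0]
  · simp [Fin.sum_univ_three]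
  · exact Real.sqrt_nonneg 3
  · rw [Real.sq_sqrt (by norm_num : (3:ℝ) ≥ 0)]
    simp [Fin.sum_univ_three, Matrix.mulVec, dotProduct]
    norm_num

/-- `‖p(T₁,T₂,T₃)‖ ≥ 2 > √3 = sup_{z ∈ closed polydisc} ‖p(z)‖`, so the
commuting contractions `(T₁,T₂,T₃)` fail the matrix-valued von Neumann inequality. -/
theorem parrott_fails_matrix_von_neumann :
    2 ≤ ‖Matrix.toEuclideanCLM (𝕜 := ℂ) parrottPT‖ ∧
    sSup {x : ℝ | ∃ z₁ z₂ z₃ : ℂ,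
        ‖z₁‖ ≤ 1 ∧ ‖z₂‖ ≤ 1 ∧ ‖z₃‖ ≤ 1 ∧
        x = ‖Matrix.toEuclideanCLM (𝕜 := ℂ)
              !![z₁, z₂, 0; z₃, 0, z₂; 0, z₃, -z₁]‖}
      = Real.sqrt 3 ∧
    Real.sqrt 3 < 2 := by
  have hsqrt3 : Real.sqrt 3 < 2 := by
    nlinarith [Real.sq_sqrt (by norm_num : (3:ℝ) ≥ 0), Real.sqrt_nonneg 3]
  refine ⟨?_, ?_, hsqrt3⟩
  · apply parrott_helper_ge _ _
      (fun x => ![Sum.elim ![0,1,0] 0, Sum.elim ![-1,0,0] 0, Sum.elim ![0,0,1] 0] x.1 x.2)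
    · simp [Fintype.sum_prod_type, Fintype.sum_sum_type, Fin.sum_univ_succ]
      norm_num
    · norm_num
    · simp [parrottPT, parrottT, parrottA, Matrix.mulVec, dotProduct,
        Matrix.fromBlocks, Fintype.sum_prod_type, Fintype.sum_sum_type, Fin.sum_univ_succ,
        Matrix.cons_val', Matrix.cons_val_zero, Matrix.cons_val_one, Matrix.head_cons,
        Matrix.of_apply, Matrix.neg_apply, Matrix.zero_apply, Sum.elim_inl, Sum.elim_inr]
      norm_num
  · have hub : ∀ x ∈ {x : ℝ | ∃ z₁ z₂ z₃ : ℂ,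
        ‖z₁‖ ≤ 1 ∧ ‖z₂‖ ≤ 1 ∧ ‖z₃‖ ≤ 1 ∧
        x = ‖Matrix.toEuclideanCLM (𝕜 := ℂ)
              !![z₁, z₂, 0; z₃, 0, z₂; 0, z₃, -z₁]‖}, x ≤ Real.sqrt 3 := by
      rintro x ⟨z₁, z₂, z₃, h₁, h₂, h₃, rfl⟩
      exact parrott_poly_le z₁ z₂ z₃ h₁ h₂ h₃
    have hmem : Real.sqrt 3 ∈ {x : ℝ | ∃ z₁ z₂ z₃ : ℂ,
        ‖z₁‖ ≤ 1 ∧ ‖z₂‖ ≤ 1 ∧ ‖z₃‖ ≤ 1 ∧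
        x = ‖Matrix.toEuclideanCLM (𝕜 := ℂ)
              !![z₁, z₂, 0; z₃, 0, z₂; 0, z₃, -z₁]‖} := by
      refine ⟨1, 1, 1, by norm_num, by norm_num, by norm_num, ?_⟩
      refine le_antisymm ?_ ?_
      · exact parrott_poly_ge
      · exact parrott_poly_le 1 1 1 (by norm_num) (by norm_num) (by norm_num)
    exact le_antisymm (Real.sSup_le hub (Real.sqrt_nonneg 3))
      (le_csSup ⟨Real.sqrt 3, hub⟩ hmem)
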